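/- Let m, k ≥ 1, n = m + k, with stationary linear constraints α_ν = Σ_{j=1}^m a_{ν,j}(q₁,…,qₙ) q̇_j (C² coefficients independent of t), a C² kinetic energy T independent of t, a C² potential U = U(q₁,…,qₙ) independent of t, T* the restriction of T obtained by substituting q̇_{m+ν} = α_ν, and L* := T* + U (so that ∂L*/∂t = 0). Define B_i^ν as in the Voronec-type formalism. Then along every C² admissible curve q(t) (q̇_{m+ν} = α_ν along the curve) satisfying the equations of motion d/dt(∂T*/∂q̇_i) − ∂T*/∂q_i − Σ_{ν=1}^k (∂T*/∂q_{m+ν}) a_{ν,i} − Σ_{ν=1}^k B_i^ν ∂T/∂q̇_{m+ν} = ∂U/∂q_i + Σ_{ν=1}^k a_{ν,i} ∂U/∂q_{m+ν} for i = 1,…,m, the quantity I := Σ_{i=1}^m q̇_i ∂L*/∂q̇_i − L*, evaluated along the curve, is constant in t. Moreover, if T = (1/2) Σ_{i,j=1}^n g_{i,j}(q) q̇_i q̇_j + Σ_{i=1}^n b_i(q) q̇_i + c(q), then I = Σ_{r,s=1}^m [ (1/2) g_{r,s} + (1/2) Σ_{ν,μ=1}^k g_{m+ν,m+μ} a_{ν,r}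 a_{μ,s} + Σ_{ν=1}^k g_{r,m+ν} a_{ν,s} ] q̇_r q̇_s − U − c. -/

import Mathlib

open scoped BigOperators

noncomputable section

/-- A (time-independent) phase point: positions `q ∈ ℝⁿ` and independent velocities
`v ∈ ℝᵐ`. -/
abbrev PhasePt (n m : ℕ) : Type := (Fin n → ℝ) × (Fin m → ℝ)

/-- Partial derivative with respect to the coordinate `q i`. -/
def pq {n m : ℕ} (f : PhasePt n m → ℝ) (i : Fin n) (p : PhasePt n m) : ℝ :=
  fderiv ℝ f p (Pi.single i 1, 0)

/-- Partial derivative with respect to the independent velocity `q̇ r`. -/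
def pv {n m : ℕ} (f : PhasePt n m → ℝ) (r : Fin m) (p : PhasePt n m) : ℝ :=
  fderiv ℝ f p (0, Pi.single r 1)

variable {m k : ℕ}

/-- The independent velocities along a curve. -/
def ivel (q : ℝ → Fin (m + k) → ℝ) (t : ℝ) : Fin m → ℝ :=
  fun i => deriv q t (Fin.castAdd k i)

/-- The phase-space lift of a curve. -/
def plift (q : ℝ → Fin (m + k) → ℝ) (t : ℝ) : PhasePt (m + k) m :=
  (q t, ivel q t)

/-- The stationary linear constraint functions `α ν = ∑ j a ν j (q) q̇ j`. -/
def alin (a : Fin k → Fin m → (Fin (m + k) → ℝ) → ℝ) (ν : Fin k) (p : PhasePt (m + k) m) : ℝ :=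
  ∑ j : Fin m, a ν j p.1 * p.2 j

/-- Admissibility: `q̇ (m+ν) = α ν` along the curve. -/
def Admissible (a : Fin k → Fin m → (Fin (m + k) → ℝ) → ℝ) (q : ℝ → Fin (m + k) → ℝ) : Prop :=
  ∀ (t : ℝ) (ν : Fin k), deriv q t (Fin.natAdd m ν) = alin a ν (plift q t)

/-- The full velocity vector `(q̇ ₁,…,q̇ _m, α₁,…,α_k)`. -/
def extVel (a : Fin k → Fin m → (Fin (m + k) → ℝ) → ℝ) (p : PhasePt (m + k) m) :
    Fin (m + k) → ℝ :=
  Fin.append p.2 (fun ν => alin a ν p)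

/-- The restriction `T*` of the kinetic energy. -/
def subst (a : Fin k → Fin m → (Fin (m + k) → ℝ) → ℝ)
    (T : (Fin (m + k) → ℝ) × (Fin (m + k) → ℝ) → ℝ) (p : PhasePt (m + k) m) : ℝ :=
  T (p.1, extVel a p)

/-- `∂T/∂q̇ (m+ν)` with the dependent velocities replaced via the constraints. -/
def pvT (a : Fin k → Fin m → (Fin (m + k) → ℝ) → ℝ)
    (T : (Fin (m + k) → ℝ) × (Fin (m + k) → ℝ) → ℝ) (ν : Fin k) (p : PhasePt (m + k) m) : ℝ :=
  fderiv ℝ T (p.1, extVel a p) (0, Pi.single (Fin.natAdd m ν) 1)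

/-- The classical Voronec coefficients `β ν i r` for stationary linear constraints. -/
def betaCoef (a : Fin k → Fin m → (Fin (m + k) → ℝ) → ℝ) (ν : Fin k) (i r : Fin m)
    (x : Fin (m + k) → ℝ) : ℝ :=
  fderiv ℝ (a ν i) x (Pi.single (Fin.castAdd k r) 1)
    - fderiv ℝ (a ν r) x (Pi.single (Fin.castAdd k i) 1)
    + ∑ μ : Fin k,
        (fderiv ℝ (a ν i) x (Pi.single (Fin.natAdd m μ) 1) * a μ r x
          - fderiv ℝ (a ν r) x (Pi.single (Fin.natAdd m μ) 1) * a μ i x)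

/-- The Lagrangian `L* = T* + U`. -/
def Lag (a : Fin k → Fin m → (Fin (m + k) → ℝ) → ℝ)
    (T : (Fin (m + k) → ℝ) × (Fin (m + k) → ℝ) → ℝ) (U : (Fin (m + k) → ℝ) → ℝ)
    (p : PhasePt (m + k) m) : ℝ :=
  subst a T p + U p.1

/-- The generalized energy `∑ i q̇ i ∂L*/∂q̇ i − L*` along a curve. -/
def energy (L : PhasePt (m + k) m → ℝ) (q : ℝ → Fin (m + k) → ℝ) (t : ℝ) : ℝ :=
  (∑ i : Fin m, ivel q t i * pv L i (plift q t)) - L (plift q t)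

/- ### auxiliary lemmas ### -/


lemma contDiff_alin (a : Fin k → Fin m → (Fin (m + k) → ℝ) → ℝ)
    (ha : ∀ ν j, ContDiff ℝ 2 (a ν j)) (ν : Fin k) : ContDiff ℝ 2 (alin a ν) := by
  unfold alin
  apply ContDiff.sum
  intro j _
  exact ((ha ν j).comp contDiff_fst).mul ((contDiff_apply ℝ ℝ j).comp contDiff_snd)

lemma contDiff_extVel (a : Fin k → Fin m → (Fin (m + k) → ℝ) → ℝ)
    (ha : ∀ ν j, ContDiff ℝ 2 (a ν j)) :
    ContDiff ℝ 2 (fun p : PhasePt (m + k) m => extVel a p) := by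
  rw [contDiff_pi]
  intro j
  refine Fin.addCases (motive := fun j => ContDiff ℝ 2 (fun p : PhasePt (m+k) m => extVel a p j)) ?_ ?_ j
  · intro r
    simp only [extVel, Fin.append_left]
    exact (contDiff_apply ℝ ℝ r).comp contDiff_snd
  · intro ν
    simp only [extVel, Fin.append_right]
    exact contDiff_alin a ha ν

lemma contDiff_subst (a : Fin k → Fin m → (Fin (m + k) → ℝ) → ℝ)
    (ha : ∀ ν j, ContDiff ℝ 2 (a ν j))
    (T : (Fin (m + k) → ℝ) × (Fin (m + k) → ℝ) → ℝ) (hT : ContDiff ℝ 2 T) :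
    ContDiff ℝ 2 (subst a T) :=
  hT.comp ((contDiff_fst).prodMk (contDiff_extVel a ha))

lemma contDiff_ivel (q : ℝ → Fin (m + k) → ℝ) (hq : ContDiff ℝ 2 q) :
    ContDiff ℝ 1 (ivel q) := by
  have h2 : (2 : WithTop ℕ∞) = 1 + 1 := by norm_num
  rw [h2, contDiff_succ_iff_deriv] at hq
  have hd : ContDiff ℝ 1 (deriv q) := hq.2.2
  have : ivel q = (fun w : Fin (m+k) → ℝ => fun i : Fin m => w (Fin.castAdd k i)) ∘ deriv q := rfl
  rw [this]
  exact (contDiff_pi.mpr fun i => contDiff_apply ℝ ℝ (Fin.castAdd k i)).comp hd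

lemma contDiff_plift (q : ℝ → Fin (m + k) → ℝ) (hq : ContDiff ℝ 2 q) :
    ContDiff ℝ 1 (plift q) :=
  (hq.of_le (by norm_num)).prodMk (contDiff_ivel q hq)

lemma hasDerivAt_plift (q : ℝ → Fin (m + k) → ℝ) (hq : ContDiff ℝ 2 q) (t : ℝ) :
    HasDerivAt (plift q) (deriv q t, deriv (ivel q) t) t := by
  have h1 : HasDerivAt q (deriv q t) t :=
    ((hq.differentiable (by norm_num)) t).hasDerivAt
  have h2 : HasDerivAt (ivel q) (deriv (ivel q) t) t :=
    (((contDiff_ivel q hq).differentiable one_ne_zero) t).hasDerivAt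
  exact h1.prodMk h2

lemma diffAt_pv_comp (f : PhasePt (m+k) m → ℝ) (hf : ContDiff ℝ 2 f) (i : Fin m)
    (q : ℝ → Fin (m + k) → ℝ) (hq : ContDiff ℝ 2 q) (t : ℝ) :
    DifferentiableAt ℝ (fun s => pv f i (plift q s)) t := by
  have h1 : ContDiff ℝ 1 (fderiv ℝ f) := hf.fderiv_right (by norm_num)
  have h2 : ContDiff ℝ 1 (fun p => fderiv ℝ f p ((0 : Fin (m+k) → ℝ), Pi.single i 1)) := by
    exact (ContinuousLinearMap.apply ℝ ℝ ((0 : Fin (m+k) → ℝ), Pi.single i (1:ℝ))).contDiff.comp h1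
  exact ((h2.comp (contDiff_plift q hq)).differentiable one_ne_zero) t

lemma eq_sum_single {n : ℕ} (x : Fin n → ℝ) :
    x = ∑ j : Fin n, x j • (Pi.single j 1 : Fin n → ℝ) := by
  conv_lhs => rw [pi_eq_sum_univ x]
  refine Finset.sum_congr rfl fun j _ => ?_
  ext l
  by_cases h : j = l <;> simp [Pi.single_apply, h, eq_comm]

lemma clm_decomp {n m : ℕ} (Φ : PhasePt n m →L[ℝ] ℝ) (x : Fin n → ℝ) (v : Fin m → ℝ) :
    Φ (x, v) = (∑ j : Fin n, x j * Φ (Pi.single j 1, 0))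
      + ∑ i : Fin m, v i * Φ (0, Pi.single i 1) := by
  have hx : (x, v) = (∑ j : Fin n, x j • ((Pi.single j 1 : Fin n → ℝ), (0 : Fin m → ℝ)))
      + ∑ i : Fin m, v i • ((0 : Fin n → ℝ), (Pi.single i 1 : Fin m → ℝ)) := by
    rw [Prod.ext_iff]
    constructor
    · simp only [Prod.fst_add, Prod.fst_sum, Prod.smul_fst, Prod.snd_sum]
      simp only [smul_zero, Finset.sum_const_zero, add_zero]
      exact eq_sum_single x
    · simp only [Prod.snd_add, Prod.snd_sum, Prod.smul_snd]
      simp only [smul_zero, Finset.sum_const_zero, zero_add]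
      exact eq_sum_single v
  rw [hx, map_add, map_sum, map_sum]
  congr 1 <;> exact Finset.sum_congr rfl fun j _ => by rw [map_smul]; rfl

lemma fderiv_Ufst {n m : ℕ} (U : (Fin n → ℝ) → ℝ) (hU : ContDiff ℝ 2 U) (p : PhasePt n m) :
    HasFDerivAt (fun p : PhasePt n m => U p.1)
      ((fderiv ℝ U p.1).comp (ContinuousLinearMap.fst ℝ (Fin n → ℝ) (Fin m → ℝ))) p :=
  ((hU.differentiable (by norm_num)) p.1).hasFDerivAt.comp p (hasFDerivAt_fst)

lemma fderiv_Lag (a : Fin k → Fin m → (Fin (m + k) → ℝ) → ℝ)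
    (ha : ∀ ν j, ContDiff ℝ 2 (a ν j))
    (T : (Fin (m + k) → ℝ) × (Fin (m + k) → ℝ) → ℝ) (hT : ContDiff ℝ 2 T)
    (U : (Fin (m + k) → ℝ) → ℝ) (hU : ContDiff ℝ 2 U) (p : PhasePt (m+k) m) :
    HasFDerivAt (Lag a T U)
      (fderiv ℝ (subst a T) p + (fderiv ℝ U p.1).comp
        (ContinuousLinearMap.fst ℝ (Fin (m+k) → ℝ) (Fin m → ℝ))) p :=
  (((contDiff_subst a ha T hT).differentiable (by norm_num)) p).hasFDerivAt.add
    (fderiv_Ufst U hU p)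

lemma pv_Lag (a : Fin k → Fin m → (Fin (m + k) → ℝ) → ℝ)
    (ha : ∀ ν j, ContDiff ℝ 2 (a ν j))
    (T : (Fin (m + k) → ℝ) × (Fin (m + k) → ℝ) → ℝ) (hT : ContDiff ℝ 2 T)
    (U : (Fin (m + k) → ℝ) → ℝ) (hU : ContDiff ℝ 2 U) (i : Fin m) (p : PhasePt (m+k) m) :
    pv (Lag a T U) i p = pv (subst a T) i p := by
  unfold pv
  rw [(fderiv_Lag a ha T hT U hU p).fderiv]
  simp

lemma pq_Lag (a : Fin k → Fin m → (Fin (m + k) → ℝ) → ℝ)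
    (ha : ∀ ν j, ContDiff ℝ 2 (a ν j))
    (T : (Fin (m + k) → ℝ) × (Fin (m + k) → ℝ) → ℝ) (hT : ContDiff ℝ 2 T)
    (U : (Fin (m + k) → ℝ) → ℝ) (hU : ContDiff ℝ 2 U) (j : Fin (m+k)) (p : PhasePt (m+k) m) :
    pq (Lag a T U) j p = pq (subst a T) j p + fderiv ℝ U p.1 (Pi.single j 1) := by
  unfold pq
  rw [(fderiv_Lag a ha T hT U hU p).fderiv]
  simp

lemma betaCoef_antisymm (a : Fin k → Fin m → (Fin (m + k) → ℝ) → ℝ) (ν : Fin k) (i r : Fin m)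
    (x : Fin (m + k) → ℝ) : betaCoef a ν i r x = - betaCoef a ν r i x := by
  unfold betaCoef
  rw [neg_add, ← Finset.sum_neg_distrib]
  ring_nf
  congr 1
  exact Finset.sum_congr rfl fun μ _ => by ring

lemma antisymm_quad_sum {m : ℕ} (β : Fin m → Fin m → ℝ) (hβ : ∀ i r, β i r = - β r i)
    (v : Fin m → ℝ) : ∑ i : Fin m, ∑ r : Fin m, β i r * v i * v r = 0 := by
  have h : (∑ i : Fin m, ∑ r : Fin m, β i r * v i * v r)
      = - ∑ i : Fin m, ∑ r : Fin m, β i r * v i * v r := by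
    conv_lhs => rw [Finset.sum_comm]
    rw [← Finset.sum_neg_distrib]
    refine Finset.sum_congr rfl fun r _ => ?_
    rw [← Finset.sum_neg_distrib]
    refine Finset.sum_congr rfl fun i _ => ?_
    rw [hβ i r]; ring
  linarith


lemma final_algebra {m k : ℕ} (S : ℝ) (v A DUc Bt : Fin m → ℝ) (G DUn : Fin k → ℝ)
    (aa : Fin k → Fin m → ℝ)
    (hB : ∑ i : Fin m, v i * Bt i = 0) :
    (0:ℝ) = S + (∑ i : Fin m, v i * (A i + (∑ ν : Fin k, G ν * aa ν i) + Bt i + DUc i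
        + ∑ ν : Fin k, aa ν i * DUn ν))
      - ((∑ i : Fin m, v i * (A i + DUc i))
        + (∑ ν : Fin k, (∑ r : Fin m, aa ν r * v r) * (G ν + DUn ν)) + S) := by
  have h1 : ∑ i : Fin m, v i * (A i + (∑ ν : Fin k, G ν * aa ν i) + Bt i + DUc i
        + ∑ ν : Fin k, aa ν i * DUn ν)
      = (∑ i : Fin m, v i * (A i + DUc i)) + (∑ i : Fin m, v i * Bt i)
        + ∑ i : Fin m, ∑ ν : Fin k, aa ν i * v i * (G ν + DUn ν) := by
    rw [← Finset.sum_add_distrib, ← Finset.sum_add_distrib]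
    refine Finset.sum_congr rfl fun i _ => ?_
    have h0 : ∑ ν : Fin k, aa ν i * v i * (G ν + DUn ν)
        = v i * (∑ ν : Fin k, G ν * aa ν i) + v i * (∑ ν : Fin k, aa ν i * DUn ν) := by
      rw [Finset.mul_sum, Finset.mul_sum, ← Finset.sum_add_distrib]
      exact Finset.sum_congr rfl fun ν _ => by ring
    rw [h0]; ring
  have h2 : ∑ i : Fin m, ∑ ν : Fin k, aa ν i * v i * (G ν + DUn ν)
      = ∑ ν : Fin k, (∑ r : Fin m, aa ν r * v r) * (G ν + DUn ν) := by
    rw [Finset.sum_comm]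
    refine Finset.sum_congr rfl fun ν _ => ?_
    rw [Finset.sum_mul]
  rw [h1]
  linarith

/- ###### core conservation lemma ###### -/

lemma energy_deriv_zero
    (a : Fin k → Fin m → (Fin (m + k) → ℝ) → ℝ) (ha : ∀ ν j, ContDiff ℝ 2 (a ν j))
    (T : (Fin (m + k) → ℝ) × (Fin (m + k) → ℝ) → ℝ) (hT : ContDiff ℝ 2 T)
    (U : (Fin (m + k) → ℝ) → ℝ) (hU : ContDiff ℝ 2 U)
    (q : ℝ → Fin (m + k) → ℝ) (hq : ContDiff ℝ 2 q)
    (hadm : Admissible a q)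
    (heom : ∀ (t : ℝ) (i : Fin m),
      deriv (fun s => pv (subst a T) i (plift q s)) t
        - pq (subst a T) (Fin.castAdd k i) (plift q t)
        - (∑ ν : Fin k, pq (subst a T) (Fin.natAdd m ν) (plift q t) * a ν i (q t))
        - (∑ ν : Fin k, (∑ r : Fin m, betaCoef a ν i r (q t) * ivel q t r)
            * pvT a T ν (plift q t)) =
      fderiv ℝ U (q t) (Pi.single (Fin.castAdd k i) 1)
        + ∑ ν : Fin k, a ν i (q t) * fderiv ℝ U (q t) (Pi.single (Fin.natAdd m ν) 1))
    (t : ℝ) :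
    HasDerivAt (energy (Lag a T U) q) 0 t := by
  classical
  set f := subst a T with hf_def
  have hf : ContDiff ℝ 2 f := contDiff_subst a ha T hT
  set Pt := plift q t with hPt_def
  set x := q t with hx_def
  set v := ivel q t with hv_def
  set Dq := deriv q t with hDq_def
  set Dv := deriv (ivel q) t with hDv_def
  -- rewrite energy in terms of f
  have hE : energy (Lag a T U) q = fun s =>
      (∑ i : Fin m, ivel q s i * pv f i (plift q s)) - Lag a T U (plift q s) := by
    funext s
    unfold energy
    congr 1
    exact Finset.sum_congr rfl fun i _ => by rw [pv_Lag a ha T hT U hU i (plift q s)]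
  rw [hE]
  -- derivative of the Lagrangian part
  have hL : HasDerivAt (fun s => Lag a T U (plift q s))
      ((∑ j : Fin (m+k), Dq j * pq (Lag a T U) j Pt)
        + ∑ i : Fin m, Dv i * pv (Lag a T U) i Pt) t := by
    have h2 := clm_decomp (fderiv ℝ (Lag a T U) Pt) Dq Dv
    have h3 : fderiv ℝ (Lag a T U) Pt = fderiv ℝ f Pt + (fderiv ℝ U Pt.1).comp
        (ContinuousLinearMap.fst ℝ (Fin (m+k) → ℝ) (Fin m → ℝ)) :=
      (fderiv_Lag a ha T hT U hU Pt).fderiv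
    have h1 : HasDerivAt (fun s => Lag a T U (plift q s))
        ((fderiv ℝ (Lag a T U) Pt) (Dq, Dv)) t := by
      have h0 := (fderiv_Lag a ha T hT U hU Pt).comp_hasDerivAt t (hasDerivAt_plift q hq t)
      rw [← h3] at h0
      exact h0
    rw [h2] at h1
    simpa only [pq, pv] using h1
  -- derivative of the sum part
  set P' : Fin m → ℝ := fun i => deriv (fun s => pv f i (plift q s)) t with hP'_def
  have hS : HasDerivAt (fun s => ∑ i : Fin m, ivel q s i * pv f i (plift q s))
      (∑ i : Fin m, (Dv i * pv f i Pt + v i * P' i)) t := by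
    apply HasDerivAt.fun_sum
    intro i _
    have hvi : HasDerivAt (fun s => ivel q s i) (Dv i) t := by
      have h := (((contDiff_ivel q hq).differentiable one_ne_zero) t).hasDerivAt
      have := ((ContinuousLinearMap.proj (R := ℝ) (φ := fun _ : Fin m => ℝ) i).hasFDerivAt
        (x := v)).comp_hasDerivAt t h
      exact this
    have hpi : HasDerivAt (fun s => pv f i (plift q s)) (P' i) t :=
      (diffAt_pv_comp f hf i q hq t).hasDerivAt
    exact hvi.mul hpi
  have hED : HasDerivAt (fun s =>
      (∑ i : Fin m, ivel q s i * pv f i (plift q s)) - Lag a T U (plift q s))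
      ((∑ i : Fin m, (Dv i * pv f i Pt + v i * P' i))
        - ((∑ j : Fin (m+k), Dq j * pq (Lag a T U) j Pt)
            + ∑ i : Fin m, Dv i * pv (Lag a T U) i Pt)) t := hS.sub hL
  -- now show the derivative is zero
  convert hED using 1
  -- compute: replace pv (Lag) by pv f, pq (Lag) decomposition
  have hpv : ∀ i, pv (Lag a T U) i Pt = pv f i Pt := fun i => pv_Lag a ha T hT U hU i Pt
  have hpq : ∀ j, pq (Lag a T U) j Pt = pq f j Pt + fderiv ℝ U x (Pi.single j 1) :=
    fun j => pq_Lag a ha T hT U hU j Pt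
  simp only [hpv, hpq]
  rw [Finset.sum_add_distrib]
  -- split the j-sum
  rw [Fin.sum_univ_add (f := fun j => Dq j * (pq f j Pt + fderiv ℝ U x (Pi.single j 1)))]
  have hDqc : ∀ i : Fin m, Dq (Fin.castAdd k i) = v i := fun i => rfl
  have hDqn : ∀ ν : Fin k, Dq (Fin.natAdd m ν) = ∑ r : Fin m, a ν r x * v r := by
    intro ν
    rw [hDq_def]
    exact hadm t ν
  simp only [hDqc, hDqn]
  -- use the equations of motion to rewrite P'
  have hP' : ∀ i : Fin m, P' i = pq f (Fin.castAdd k i) Pt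
      + (∑ ν : Fin k, pq f (Fin.natAdd m ν) Pt * a ν i x)
      + (∑ ν : Fin k, (∑ r : Fin m, betaCoef a ν i r x * v r) * pvT a T ν Pt)
      + fderiv ℝ U x (Pi.single (Fin.castAdd k i) 1)
      + ∑ ν : Fin k, a ν i x * fderiv ℝ U x (Pi.single (Fin.natAdd m ν) 1) := by
    intro i
    have h := heom t i
    have h2 : P' i = deriv (fun s => pv f i (plift q s)) t := by rw [hP'_def]
    rw [h2]
    linarith
  -- the β-term vanishes
  have hbeta : ∑ i : Fin m, v i *
      (∑ ν : Fin k, (∑ r : Fin m, betaCoef a ν i r x * v r) * pvT a T ν Pt) = 0 := by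
    have e1 : ∀ i : Fin m, v i *
        (∑ ν : Fin k, (∑ r : Fin m, betaCoef a ν i r x * v r) * pvT a T ν Pt)
        = ∑ ν : Fin k, ∑ r : Fin m,
            (betaCoef a ν i r x * pvT a T ν Pt) * v i * v r := by
      intro i
      rw [Finset.mul_sum]
      refine Finset.sum_congr rfl fun ν _ => ?_
      rw [Finset.sum_mul, Finset.mul_sum]
      refine Finset.sum_congr rfl fun r _ => by ring
    rw [Finset.sum_congr rfl fun i _ => e1 i, Finset.sum_comm]
    refine Finset.sum_eq_zero fun ν _ => ?_
    exact antisymm_quad_sum _ (fun i r => by rw [betaCoef_antisymm]; ring) v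
  -- final algebra
  simp only [hP']
  exact final_algebra (∑ i : Fin m, Dv i * pv f i Pt) v
    (fun i => pq f (Fin.castAdd k i) Pt)
    (fun i => fderiv ℝ U x (Pi.single (Fin.castAdd k i) 1))
    (fun i => ∑ ν : Fin k, (∑ r : Fin m, betaCoef a ν i r x * v r) * pvT a T ν Pt)
    (fun ν => pq f (Fin.natAdd m ν) Pt)
    (fun ν => fderiv ℝ U x (Pi.single (Fin.natAdd m ν) 1))
    (fun ν i => a ν i x) hbeta


lemma extVel_smul (a : Fin k → Fin m → (Fin (m + k) → ℝ) → ℝ) (p : PhasePt (m + k) m) (s : ℝ) :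
    extVel a (p.1, s • p.2) = s • extVel a p := by
  funext j
  refine Fin.addCases (motive := fun j => extVel a (p.1, s • p.2) j = (s • extVel a p) j) ?_ ?_ j
  · intro r
    simp [extVel, Fin.append_left]
  · intro ν
    simp only [extVel, Fin.append_right, Pi.smul_apply, alin, smul_eq_mul, Finset.mul_sum]
    exact Finset.sum_congr rfl fun j _ => by
      show a ν j p.1 * (s • p.2) j = s * (a ν j p.1 * p.2 j)
      rw [Pi.smul_apply, smul_eq_mul]; ring

-- The Euler-type identity.  A B C : ℝ, with φ s = s^2*A + s*B + C
lemma hasDerivAt_quad (A B C : ℝ) :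
    HasDerivAt (fun s : ℝ => s^2 * A + s * B + C) (2*A + B) 1 := by
  have h := (((hasDerivAt_pow 2 (1:ℝ)).mul_const A).add ((hasDerivAt_id (1:ℝ)).mul_const B)).add_const C
  norm_num at h
  simpa using h

lemma sum_pv_eq_fderiv {n m : ℕ} (f : PhasePt n m → ℝ) (p : PhasePt n m) :
    ∑ i : Fin m, p.2 i * pv f i p = fderiv ℝ f p (0, p.2) := by
  have hx : ((0 : Fin n → ℝ), p.2)
      = ∑ i : Fin m, p.2 i • ((0 : Fin n → ℝ), (Pi.single i 1 : Fin m → ℝ)) := by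
    rw [Prod.ext_iff]
    constructor
    · simp [Prod.fst_sum]
    · simp only [Prod.snd_sum, Prod.smul_snd]
      have : p.2 = ∑ j : Fin m, p.2 j • (Pi.single j 1 : Fin m → ℝ) := by
        conv_lhs => rw [pi_eq_sum_univ p.2]
        refine Finset.sum_congr rfl fun j _ => ?_
        ext l
        by_cases h : j = l <;> simp [Pi.single_apply, h, eq_comm]
      exact this
  rw [hx, map_sum]
  exact Finset.sum_congr rfl fun i _ => by rw [map_smul]; rfl

lemma euler_identity
    (a : Fin k → Fin m → (Fin (m + k) → ℝ) → ℝ) (ha : ∀ ν j, ContDiff ℝ 2 (a ν j))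
    (T : (Fin (m + k) → ℝ) × (Fin (m + k) → ℝ) → ℝ) (hT : ContDiff ℝ 2 T)
    (hsub : ContDiff ℝ 2 (subst a T))
    (g : Fin (m + k) → Fin (m + k) → (Fin (m + k) → ℝ) → ℝ)
    (b : Fin (m + k) → (Fin (m + k) → ℝ) → ℝ) (c : (Fin (m + k) → ℝ) → ℝ)
    (hTform : ∀ (x u : Fin (m + k) → ℝ),
        T (x, u) = (1 / 2) * (∑ i : Fin (m + k), ∑ j : Fin (m + k), g i j x * u i * u j)
          + (∑ i : Fin (m + k), b i x * u i) + c x)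
    (p : PhasePt (m+k) m) :
    ∑ i : Fin m, p.2 i * pv (subst a T) i p =
      2 * ((1/2) * ∑ i : Fin (m+k), ∑ j : Fin (m+k),
            g i j p.1 * extVel a p i * extVel a p j)
        + ∑ i : Fin (m+k), b i p.1 * extVel a p i := by
  set w := extVel a p with hw
  set A := (1/2) * ∑ i : Fin (m+k), ∑ j : Fin (m+k), g i j p.1 * w i * w j with hA
  set B := ∑ i : Fin (m+k), b i p.1 * w i with hB
  -- the scaled curve
  have hψ : HasDerivAt (fun s : ℝ => ((p.1 : Fin (m+k) → ℝ), s • p.2))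
      (((0 : Fin (m+k) → ℝ), p.2)) 1 := by
    have h1 : HasDerivAt (fun s : ℝ => s • p.2) ((1:ℝ) • p.2) 1 :=
      (hasDerivAt_id (1:ℝ)).smul_const p.2
    rw [one_smul] at h1
    exact (hasDerivAt_const (1:ℝ) p.1).prodMk h1
  have hp : ((p.1 : Fin (m+k) → ℝ), (1:ℝ) • p.2) = p := by rw [one_smul]
  have hcomp : HasDerivAt (fun s : ℝ => subst a T (p.1, s • p.2))
      (fderiv ℝ (subst a T) p (0, p.2)) 1 := by
    have hd : HasFDerivAt (subst a T) (fderiv ℝ (subst a T) p) p :=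
      ((hsub.differentiable (by norm_num)) p).hasFDerivAt
    rw [← hp] at hd
    have h := hd.comp_hasDerivAt 1 hψ
    rw [hp] at h
    exact h
  -- the function is an explicit quadratic
  have hfun : (fun s : ℝ => subst a T (p.1, s • p.2))
      = fun s : ℝ => s^2 * A + s * B + c p.1 := by
    funext s
    show T ((p.1, s • p.2).1, extVel a (p.1, s • p.2)) = _
    rw [extVel_smul a p s]
    rw [hTform]
    simp only [Pi.smul_apply, smul_eq_mul, ← hw]
    have h1 : ∑ i : Fin (m+k), ∑ j : Fin (m+k), g i j p.1 * (s * w i) * (s * w j)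
        = s^2 * ∑ i : Fin (m+k), ∑ j : Fin (m+k), g i j p.1 * w i * w j := by
      rw [Finset.mul_sum]
      refine Finset.sum_congr rfl fun i _ => ?_
      rw [Finset.mul_sum]
      exact Finset.sum_congr rfl fun j _ => by ring
    have h2 : ∑ i : Fin (m+k), b i p.1 * (s * w i) = s * ∑ i : Fin (m+k), b i p.1 * w i := by
      rw [Finset.mul_sum]
      exact Finset.sum_congr rfl fun i _ => by ring
    rw [h1, h2, hA, hB]
    ring
  rw [hfun] at hcomp
  have := (hasDerivAt_quad A B (c p.1)).unique hcomp
  rw [sum_pv_eq_fderiv, ← this]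

lemma quad_split {m k : ℕ} (g : Fin (m+k) → Fin (m+k) → ℝ) (hg : ∀ i j, g i j = g j i)
    (aa : Fin k → Fin m → ℝ) (v : Fin m → ℝ) (w : Fin (m+k) → ℝ)
    (hwc : ∀ r, w (Fin.castAdd k r) = v r)
    (hwn : ∀ ν, w (Fin.natAdd m ν) = ∑ j : Fin m, aa ν j * v j) :
    (1/2) * (∑ i : Fin (m+k), ∑ j : Fin (m+k), g i j * w i * w j)
    = ∑ r : Fin m, ∑ s : Fin m,
        ((1/2) * g (Fin.castAdd k r) (Fin.castAdd k s)
          + (1/2) * (∑ ν : Fin k, ∑ μ : Fin k,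
              g (Fin.natAdd m ν) (Fin.natAdd m μ) * aa ν r * aa μ s)
          + (∑ ν : Fin k, g (Fin.castAdd k r) (Fin.natAdd m ν) * aa ν s)) * v r * v s := by
  have hsplit : ∑ i : Fin (m+k), ∑ j : Fin (m+k), g i j * w i * w j
      = (∑ r : Fin m, ∑ s : Fin m, g (Fin.castAdd k r) (Fin.castAdd k s) * v r * v s)
        + (∑ r : Fin m, ∑ μ : Fin k, g (Fin.castAdd k r) (Fin.natAdd m μ) * v r
            * (∑ j : Fin m, aa μ j * v j))
        + ((∑ ν : Fin k, ∑ s : Fin m, g (Fin.natAdd m ν) (Fin.castAdd k s)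
            * (∑ j : Fin m, aa ν j * v j) * v s)
        + (∑ ν : Fin k, ∑ μ : Fin k, g (Fin.natAdd m ν) (Fin.natAdd m μ)
            * (∑ j : Fin m, aa ν j * v j) * (∑ j : Fin m, aa μ j * v j))) := by
    rw [Fin.sum_univ_add (f := fun i => ∑ j : Fin (m+k), g i j * w i * w j)]
    congr 1
    · rw [← Finset.sum_add_distrib]
      refine Finset.sum_congr rfl fun r _ => ?_
      rw [Fin.sum_univ_add (f := fun j => g (Fin.castAdd k r) j * w (Fin.castAdd k r) * w j)]
      congr 1
      · exact Finset.sum_congr rfl fun s _ => by rw [hwc, hwc]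
      · exact Finset.sum_congr rfl fun μ _ => by rw [hwc, hwn]
    · rw [← Finset.sum_add_distrib]
      refine Finset.sum_congr rfl fun ν _ => ?_
      rw [Fin.sum_univ_add (f := fun j => g (Fin.natAdd m ν) j * w (Fin.natAdd m ν) * w j)]
      congr 1
      · exact Finset.sum_congr rfl fun s _ => by rw [hwn, hwc]
      · exact Finset.sum_congr rfl fun μ _ => by rw [hwn, hwn]
  rw [hsplit]
  have h32 : ∑ ν : Fin k, ∑ s : Fin m, g (Fin.natAdd m ν) (Fin.castAdd k s)
        * (∑ j : Fin m, aa ν j * v j) * v s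
      = ∑ r : Fin m, ∑ μ : Fin k, g (Fin.castAdd k r) (Fin.natAdd m μ) * v r
        * (∑ j : Fin m, aa μ j * v j) := by
    rw [Finset.sum_comm]
    refine Finset.sum_congr rfl fun r _ => ?_
    exact Finset.sum_congr rfl fun ν _ => by rw [hg]; ring
  have h2 : ∑ r : Fin m, ∑ μ : Fin k, g (Fin.castAdd k r) (Fin.natAdd m μ) * v r
        * (∑ j : Fin m, aa μ j * v j)
      = ∑ r : Fin m, ∑ s : Fin m,
        (∑ ν : Fin k, g (Fin.castAdd k r) (Fin.natAdd m ν) * aa ν s) * v r * v s := by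
    refine Finset.sum_congr rfl fun r _ => ?_
    have e1 : ∀ μ : Fin k, g (Fin.castAdd k r) (Fin.natAdd m μ) * v r
        * (∑ j : Fin m, aa μ j * v j)
        = ∑ s : Fin m, (g (Fin.castAdd k r) (Fin.natAdd m μ) * aa μ s) * v r * v s := by
      intro μ
      rw [Finset.mul_sum]
      exact Finset.sum_congr rfl fun s _ => by ring
    rw [Finset.sum_congr rfl fun μ _ => e1 μ, Finset.sum_comm]
    refine Finset.sum_congr rfl fun s _ => ?_
    rw [Finset.sum_mul, Finset.sum_mul]
  have h4 : ∑ ν : Fin k, ∑ μ : Fin k, g (Fin.natAdd m ν) (Fin.natAdd m μ)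
        * (∑ j : Fin m, aa ν j * v j) * (∑ j : Fin m, aa μ j * v j)
      = ∑ r : Fin m, ∑ s : Fin m,
        (∑ ν : Fin k, ∑ μ : Fin k, g (Fin.natAdd m ν) (Fin.natAdd m μ) * aa ν r * aa μ s)
          * v r * v s := by
    have e1 : ∀ ν μ : Fin k, g (Fin.natAdd m ν) (Fin.natAdd m μ)
        * (∑ j : Fin m, aa ν j * v j) * (∑ j : Fin m, aa μ j * v j)
        = ∑ r : Fin m, ∑ s : Fin m,
            (g (Fin.natAdd m ν) (Fin.natAdd m μ) * aa ν r * aa μ s) * v r * v s := by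
      intro ν μ
      rw [mul_assoc, Finset.sum_mul_sum, Finset.mul_sum]
      refine Finset.sum_congr rfl fun r _ => ?_
      rw [Finset.mul_sum]
      exact Finset.sum_congr rfl fun s _ => by ring
    calc ∑ ν : Fin k, ∑ μ : Fin k, g (Fin.natAdd m ν) (Fin.natAdd m μ)
        * (∑ j : Fin m, aa ν j * v j) * (∑ j : Fin m, aa μ j * v j)
        = ∑ ν : Fin k, ∑ μ : Fin k, ∑ r : Fin m, ∑ s : Fin m,
        (g (Fin.natAdd m ν) (Fin.natAdd m μ) * aa ν r * aa μ s) * v r * v s :=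
          Finset.sum_congr rfl fun ν _ => Finset.sum_congr rfl fun μ _ => e1 ν μ
      _ = ∑ ν : Fin k, ∑ r : Fin m, ∑ μ : Fin k, ∑ s : Fin m,
        (g (Fin.natAdd m ν) (Fin.natAdd m μ) * aa ν r * aa μ s) * v r * v s :=
          Finset.sum_congr rfl fun ν _ => Finset.sum_comm
      _ = ∑ r : Fin m, ∑ ν : Fin k, ∑ μ : Fin k, ∑ s : Fin m,
        (g (Fin.natAdd m ν) (Fin.natAdd m μ) * aa ν r * aa μ s) * v r * v s :=
          Finset.sum_comm
      _ = ∑ r : Fin m, ∑ ν : Fin k, ∑ s : Fin m, ∑ μ : Fin k,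
        (g (Fin.natAdd m ν) (Fin.natAdd m μ) * aa ν r * aa μ s) * v r * v s :=
          Finset.sum_congr rfl fun r _ => Finset.sum_congr rfl fun ν _ =>
            Finset.sum_comm
      _ = ∑ r : Fin m, ∑ s : Fin m, ∑ ν : Fin k, ∑ μ : Fin k,
        (g (Fin.natAdd m ν) (Fin.natAdd m μ) * aa ν r * aa μ s) * v r * v s :=
          Finset.sum_congr rfl fun r _ => Finset.sum_comm
      _ = _ := by
          refine Finset.sum_congr rfl fun r _ => Finset.sum_congr rfl fun s _ => ?_
          rw [Finset.sum_mul, Finset.sum_mul]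
          refine Finset.sum_congr rfl fun ν _ => ?_
          rw [Finset.sum_mul, Finset.sum_mul]
  have hRHS : ∑ r : Fin m, ∑ s : Fin m,
      ((1/2) * g (Fin.castAdd k r) (Fin.castAdd k s)
        + (1/2) * (∑ ν : Fin k, ∑ μ : Fin k,
            g (Fin.natAdd m ν) (Fin.natAdd m μ) * aa ν r * aa μ s)
        + (∑ ν : Fin k, g (Fin.castAdd k r) (Fin.natAdd m ν) * aa ν s)) * v r * v s
      = (1/2) * (∑ r : Fin m, ∑ s : Fin m, g (Fin.castAdd k r) (Fin.castAdd k s) * v r * v s)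
        + (1/2) * (∑ r : Fin m, ∑ s : Fin m,
            (∑ ν : Fin k, ∑ μ : Fin k, g (Fin.natAdd m ν) (Fin.natAdd m μ) * aa ν r * aa μ s)
              * v r * v s)
        + ∑ r : Fin m, ∑ s : Fin m,
            (∑ ν : Fin k, g (Fin.castAdd k r) (Fin.natAdd m ν) * aa ν s) * v r * v s := by
    rw [Finset.mul_sum, Finset.mul_sum, ← Finset.sum_add_distrib, ← Finset.sum_add_distrib]
    refine Finset.sum_congr rfl fun r _ => ?_
    rw [Finset.mul_sum, Finset.mul_sum, ← Finset.sum_add_distrib, ← Finset.sum_add_distrib]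
    refine Finset.sum_congr rfl fun s _ => by ring
  rw [hRHS, ← h4, ← h2, h32]
  ring

/-- Corollary 2 of the paper.  For stationary linear constraints,
time-independent kinetic energy and potential, the generalized energy (Jacobi) integral
`I = ∑ i q̇ i ∂L*/∂q̇ i − L*` is conserved along every admissible solution of the
Voronec equations of motion; moreover, if `T = ½ ∑ g i j q̇ i q̇ j + ∑ b i q̇ i + c`
with `g` symmetric, then `I` has the explicit form (27). -/
theorem jacobi_integral_conserved
    (m k : ℕ) (hm : 1 ≤ m) (hk : 1 ≤ k)
    (a : Fin k → Fin m → (Fin (m + k) → ℝ) → ℝ) (ha : ∀ ν j, ContDiff ℝ 2 (a ν j))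
    (T : (Fin (m + k) → ℝ) × (Fin (m + k) → ℝ) → ℝ) (hT : ContDiff ℝ 2 T)
    (U : (Fin (m + k) → ℝ) → ℝ) (hU : ContDiff ℝ 2 U)
    (q : ℝ → Fin (m + k) → ℝ) (hq : ContDiff ℝ 2 q)
    (hadm : Admissible a q)
    (heom : ∀ (t : ℝ) (i : Fin m),
      deriv (fun s => pv (subst a T) i (plift q s)) t
        - pq (subst a T) (Fin.castAdd k i) (plift q t)
        - (∑ ν : Fin k, pq (subst a T) (Fin.natAdd m ν) (plift q t) * a ν i (q t))
        - (∑ ν : Fin k, (∑ r : Fin m, betaCoef a ν i r (q t) * ivel q t r)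
            * pvT a T ν (plift q t)) =
      fderiv ℝ U (q t) (Pi.single (Fin.castAdd k i) 1)
        + ∑ ν : Fin k, a ν i (q t) * fderiv ℝ U (q t) (Pi.single (Fin.natAdd m ν) 1)) :
    (∀ t₁ t₂ : ℝ, energy (Lag a T U) q t₁ = energy (Lag a T U) q t₂) ∧
    (∀ (g : Fin (m + k) → Fin (m + k) → (Fin (m + k) → ℝ) → ℝ)
        (b : Fin (m + k) → (Fin (m + k) → ℝ) → ℝ) (c : (Fin (m + k) → ℝ) → ℝ),
      (∀ i j x, g i j x = g j i x) →
      (∀ (x u : Fin (m + k) → ℝ),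
        T (x, u) = (1 / 2) * (∑ i : Fin (m + k), ∑ j : Fin (m + k), g i j x * u i * u j)
          + (∑ i : Fin (m + k), b i x * u i) + c x) →
      ∀ t : ℝ,
        energy (Lag a T U) q t =
          (∑ r : Fin m, ∑ s : Fin m,
            ((1 / 2) * g (Fin.castAdd k r) (Fin.castAdd k s) (q t)
              + (1 / 2) * (∑ ν : Fin k, ∑ μ : Fin k,
                  g (Fin.natAdd m ν) (Fin.natAdd m μ) (q t) * a ν r (q t) * a μ s (q t))
              + (∑ ν : Fin k, g (Fin.castAdd k r) (Fin.natAdd m ν) (q t) * a ν s (q t)))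
            * ivel q t r * ivel q t s)
          - U (q t) - c (q t)) := by
  have hsub : ContDiff ℝ 2 (subst a T) := contDiff_subst a ha T hT
  constructor
  · -- conservation
    have hD : ∀ t : ℝ, HasDerivAt (energy (Lag a T U) q) 0 t :=
      energy_deriv_zero a ha T hT U hU q hq hadm heom
    exact fun t₁ t₂ =>
      is_const_of_deriv_eq_zero (fun t => (hD t).differentiableAt)
        (fun t => (hD t).deriv) t₁ t₂
  · -- explicit form
    intro g b c hgs hTform t
    have hpv : ∀ i, pv (Lag a T U) i (plift q t) = pv (subst a T) i (plift q t) :=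
      fun i => pv_Lag a ha T hT U hU i (plift q t)
    have heuler := euler_identity a ha T hT hsub g b c hTform (plift q t)
    have hwc : ∀ r : Fin m, extVel a (plift q t) (Fin.castAdd k r) = ivel q t r :=
      fun r => Fin.append_left _ _ r
    have hwn : ∀ ν : Fin k, extVel a (plift q t) (Fin.natAdd m ν)
        = ∑ j : Fin m, a ν j (q t) * ivel q t j :=
      fun ν => Fin.append_right _ _ ν
    have heuler' : ∑ i : Fin m, (plift q t).2 i * pv (subst a T) i (plift q t)
        = 2 * ((1/2) * ∑ i : Fin (m+k), ∑ j : Fin (m+k),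
            g i j (q t) * extVel a (plift q t) i * extVel a (plift q t) j)
          + ∑ i : Fin (m+k), b i (q t) * extVel a (plift q t) i := heuler
    have hquad : (1/2) * (∑ i : Fin (m+k), ∑ j : Fin (m+k),
          g i j (q t) * extVel a (plift q t) i * extVel a (plift q t) j)
        = ∑ r : Fin m, ∑ s : Fin m,
          ((1 / 2) * g (Fin.castAdd k r) (Fin.castAdd k s) (q t)
            + (1 / 2) * (∑ ν : Fin k, ∑ μ : Fin k,
                g (Fin.natAdd m ν) (Fin.natAdd m μ) (q t) * a ν r (q t) * a μ s (q t))
            + (∑ ν : Fin k, g (Fin.castAdd k r) (Fin.natAdd m ν) (q t) * a ν s (q t)))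
          * ivel q t r * ivel q t s :=
      quad_split (fun i j => g i j (q t)) (fun i j => hgs i j (q t))
        (fun ν i => a ν i (q t)) (ivel q t) (extVel a (plift q t)) hwc hwn
    have hLag : Lag a T U (plift q t)
        = ((1/2) * ∑ i : Fin (m+k), ∑ j : Fin (m+k),
            g i j (q t) * extVel a (plift q t) i * extVel a (plift q t) j)
          + (∑ i : Fin (m+k), b i (q t) * extVel a (plift q t) i) + c (q t) + U (q t) := by
      show subst a T (plift q t) + U (q t) = _
      show T ((plift q t).1, extVel a (plift q t)) + U (q t) = _
      rw [hTform]
      rfl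
    unfold energy
    simp only [hpv]
    have hsum : ∑ i : Fin m, ivel q t i * pv (subst a T) i (plift q t)
        = ∑ i : Fin m, (plift q t).2 i * pv (subst a T) i (plift q t) := rfl
    rw [hsum, heuler', hLag, ← hquad]
    ring

end
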